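/- arXiv:1412.6156 — 7 statements merged into one kernel-verified Lean document; each statement's English description precedes it below -/
import Mathlib

section
/- For positive reals a > b > 0, with τ* = (a-b)/(log a - log b), the quantity f(a,b) := a - τ* log(e·a/τ*) satisfies f(a,b) ≥ 0, with equality if and only if a = b (vacuous here since a > b, so f(a,b) > 0). -/
theorem stmt2 (a b : ℝ) (hb : 0 < b) (hab : b < a)
    (τ : ℝ) (hτ : τ = (a - b) / (Real.log a - Real.log b)) :
    0 < a - τ * Real.log (Real.exp 1 * a / τ) := by
  have ha : 0 < a := hb.trans hab
  have hlog : Real.log b < Real.log a := Real.log_lt_log hb hab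
  have hden : 0 < Real.log a - Real.log b := sub_pos.mpr hlog
  have hτpos : 0 < τ := by
    rw [hτ]; exact div_pos (sub_pos.mpr hab) hden
  -- τ < a
  have hba : Real.log (b / a) < b / a - 1 := by
    apply Real.log_lt_sub_one_of_pos (div_pos hb ha)
    have : b / a < 1 := (div_lt_one ha).mpr hab
    linarith
  have hba' : Real.log b - Real.log a < b / a - 1 := by
    rwa [Real.log_div hb.ne' ha.ne'] at hba
  have hτa : τ < a := by
    rw [hτ, div_lt_iff₀ hden]
    have := mul_lt_mul_of_pos_left hba' ha
    rw [mul_sub a (b/a) 1, mul_div_cancel₀ _ ha.ne'] at this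
    nlinarith
  set x := a / τ with hx
  have hx1 : 1 < x := (one_lt_div hτpos).mpr hτa
  have hlx : Real.log x < x - 1 := by
    apply Real.log_lt_sub_one_of_pos (by linarith) (by linarith)
  have hlogeq : Real.log (Real.exp 1 * a / τ) = 1 + Real.log x := by
    rw [mul_div_assoc, Real.log_mul (Real.exp_pos 1).ne' (by positivity),
      Real.log_exp]
  have hax : a = τ * x := by
    rw [hx, mul_div_cancel₀ _ hτpos.ne']
  rw [hlogeq]
  nlinarith [mul_pos hτpos (sub_pos.mpr hx1)]
end

section
/- Let A be a real symmetric n×n matrix, σ* ∈ {-1,1}^n with Σᵢ σ*ᵢ = 0, and Y* = σ*(σ*)ᵀ. Suppose there exist a diagonal matrix D* and λ* ∈ ℝ such that S* := D* - A + λ*J (J the all-ones matrix) is positive semidefinite, has second smallest eigenvalue strictly positive, and S*σ* = 0. Then Y* is the unique maximizer of ⟨A, Y⟩ over all symmetric positive semidefinite matrices Y with Yᵢᵢ = 1 for all i and ⟨J, Y⟩ = 0. -/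
open Matrix BigOperators
open scoped MatrixOrder

theorem stmt4 (n : ℕ) (A : Matrix (Fin n) (Fin n) ℝ) (hA : A.IsSymm)
    (σ : Fin n → ℝ) (hσ : ∀ i, σ i = 1 ∨ σ i = -1) (hsum : ∑ i, σ i = 0)
    (d : Fin n → ℝ) (lam : ℝ)
    (S : Matrix (Fin n) (Fin n) ℝ)
    (hS : S = Matrix.diagonal d - A + lam • (Matrix.of fun _ _ => (1 : ℝ)))
    (hpsd : S.PosSemidef)
    (hker : S *ᵥ σ = 0)
    (hl2 : ∀ x : Fin n → ℝ, x ⬝ᵥ σ = 0 → x ≠ 0 → 0 < x ⬝ᵥ (S *ᵥ x)) :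
    ∀ Y : Matrix (Fin n) (Fin n) ℝ, Y.PosSemidef → (∀ i, Y i i = 1) →
      (∑ i, ∑ j, Y i j) = 0 →
      (∑ i, ∑ j, A i j * Y i j) ≤ (∑ i, ∑ j, A i j * (σ i * σ j)) ∧
      ((∑ i, ∑ j, A i j * Y i j) = (∑ i, ∑ j, A i j * (σ i * σ j)) →
        Y = Matrix.of fun i j => σ i * σ j) := by
  intro Y hY hdiag htr
  have hσ2 : ∀ i, σ i * σ i = 1 := fun i => by rcases hσ i with h | h <;> rw [h] <;> norm_num
  have swap4 : ∀ (f : Fin n → Fin n → Fin n → Fin n → ℝ),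
      ∑ i, ∑ j, ∑ k, ∑ l, f i j k l = ∑ k, ∑ l, ∑ i, ∑ j, f i j k l := by
    intro f
    calc ∑ i, ∑ j, ∑ k, ∑ l, f i j k l
        = ∑ i, ∑ k, ∑ j, ∑ l, f i j k l :=
          Finset.sum_congr rfl fun i _ => Finset.sum_comm
      _ = ∑ k, ∑ i, ∑ j, ∑ l, f i j k l := Finset.sum_comm
      _ = ∑ k, ∑ i, ∑ l, ∑ j, f i j k l :=
          Finset.sum_congr rfl fun k _ => Finset.sum_congr rfl fun i _ => Finset.sum_comm
      _ = ∑ k, ∑ l, ∑ i, ∑ j, f i j k l :=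
          Finset.sum_congr rfl fun k _ => Finset.sum_comm
  -- key identity
  have key : ∀ (Z : Matrix (Fin n) (Fin n) ℝ), (∀ i, Z i i = 1) → (∑ i, ∑ j, Z i j) = 0 →
      ∑ i, ∑ j, A i j * Z i j = (∑ i, d i) - ∑ i, ∑ j, S i j * Z i j := by
    intro Z hd hs
    have h1 : ∀ i j, S i j * Z i j =
        (if i = j then d i * Z i j else 0) - A i j * Z i j + lam * Z i j := by
      intro i j
      rw [hS]
      simp only [Matrix.sub_apply, Matrix.add_apply, Matrix.smul_apply, Matrix.of_apply,
        Matrix.diagonal_apply, smul_eq_mul, mul_one]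
      split <;> ring
    have h3 : ∑ i, ∑ j, lam * Z i j = 0 := by
      simp only [← Finset.mul_sum]
      rw [hs, mul_zero]
    have h2 : ∑ i, ∑ j, S i j * Z i j = (∑ i, d i) - ∑ i, ∑ j, A i j * Z i j := by
      simp only [h1, Finset.sum_add_distrib, Finset.sum_sub_distrib, Finset.sum_ite_eq,
        Finset.mem_univ, if_true]
      rw [h3]
      simp [hd]
    linarith
  have hstar_sum : (∑ i, ∑ j, σ i * σ j) = 0 := by
    rw [← Finset.sum_mul_sum, hsum, mul_zero]
  have hSstar : (∑ i, ∑ j, S i j * (σ i * σ j)) = 0 := by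
    have h1 : ∀ i, ∑ j, S i j * (σ i * σ j) = σ i * (S *ᵥ σ) i := by
      intro i
      rw [Matrix.mulVec, dotProduct, Finset.mul_sum]
      exact Finset.sum_congr rfl fun j _ => by ring
    simp [h1, hker]
  have keyY := key Y hdiag htr
  have keyStar : ∑ i, ∑ j, A i j * (σ i * σ j) = (∑ i, d i) := by
    have := key (Matrix.of fun i j => σ i * σ j) (fun i => hσ2 i) hstar_sum
    simpa [hSstar] using this
  -- decompose using square roots
  set R := CFC.sqrt S with hRdef
  set Q := CFC.sqrt Y with hQdef
  have hRR : R * R = S := CFC.sqrt_mul_sqrt_self S hpsd.nonneg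
  have hQQ : Q * Q = Y := CFC.sqrt_mul_sqrt_self Y hY.nonneg
  have hRs : ∀ i j, R i j = R j i := fun i j => by
    have h := (CFC.sqrt_nonneg S).posSemidef.isHermitian.apply i j
    simp only [star_trivial] at h
    rw [hRdef]
    exact h.symm
  have hQs : ∀ i j, Q i j = Q j i := fun i j => by
    have h := (CFC.sqrt_nonneg Y).posSemidef.isHermitian.apply i j
    simp only [star_trivial] at h
    rw [hQdef]
    exact h.symm
  have e2 : ∑ i, ∑ j, S i j * Y i j = ∑ k, ∑ l, ((R * Q) k l)^2 := by
    have hSij : ∀ i j, S i j = ∑ k, R k i * R k j := by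
      intro i j
      rw [← hRR, Matrix.mul_apply]
      exact Finset.sum_congr rfl fun k _ => by rw [hRs i k]
    have hYij : ∀ i j, Y i j = ∑ l, Q i l * Q j l := by
      intro i j
      rw [← hQQ, Matrix.mul_apply]
      exact Finset.sum_congr rfl fun l _ => by rw [hQs l j]
    calc ∑ i, ∑ j, S i j * Y i j
        = ∑ i, ∑ j, ∑ k, ∑ l, (R k i * Q i l) * (R k j * Q j l) := by
          refine Finset.sum_congr rfl fun i _ => Finset.sum_congr rfl fun j _ => ?_
          rw [hSij, hYij, Finset.sum_mul_sum]
          exact Finset.sum_congr rfl fun k _ => Finset.sum_congr rfl fun l _ => by ring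
      _ = ∑ k, ∑ l, ∑ i, ∑ j, (R k i * Q i l) * (R k j * Q j l) := swap4 _
      _ = ∑ k, ∑ l, ((R * Q) k l)^2 := by
          refine Finset.sum_congr rfl fun k _ => Finset.sum_congr rfl fun l _ => ?_
          rw [Matrix.mul_apply, sq, Finset.sum_mul_sum]
  have hSYnonneg : 0 ≤ ∑ i, ∑ j, S i j * Y i j := by
    rw [e2]
    exact Finset.sum_nonneg fun k _ => Finset.sum_nonneg fun l _ => sq_nonneg _
  constructor
  · rw [keyStar]; linarith
  · intro heq
    -- equality forces ⟨S,Y⟩ = 0 hence R*Q = 0 hence S*Y = 0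
    have hSY0 : ∑ i, ∑ j, S i j * Y i j = 0 := by
      rw [keyStar] at heq; linarith
    have hRQ : R * Q = 0 := by
      rw [e2] at hSY0
      have h1 : ∀ k, (∑ l, ((R * Q) k l)^2) = 0 := fun k =>
        (Finset.sum_eq_zero_iff_of_nonneg
          (fun k _ => Finset.sum_nonneg fun l _ => sq_nonneg ((R * Q) k l))).mp
          hSY0 k (Finset.mem_univ k)
      ext k l
      have h2 := (Finset.sum_eq_zero_iff_of_nonneg
        (fun l _ => sq_nonneg ((R * Q) k l))).mp (h1 k) l (Finset.mem_univ l)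
      simpa using pow_eq_zero_iff (n := 2) (by norm_num) |>.mp h2
    have hSYmat : S * Y = 0 := by
      rw [← hRR, ← hQQ, mul_assoc, ← mul_assoc R Q Q, hRQ, zero_mul, mul_zero]
    -- kernel of S is spanned by σ
    rcases Nat.eq_zero_or_pos n with h0 | hpos
    · subst h0
      ext i j
      exact i.elim0
    have hnne : (n : ℝ) ≠ 0 := Nat.cast_ne_zero.mpr hpos.ne'
    have hσσ : σ ⬝ᵥ σ = (n : ℝ) := by
      simp [dotProduct, hσ2]
    have hkernel : ∀ y : Fin n → ℝ, S *ᵥ y = 0 → y = ((y ⬝ᵥ σ) / n) • σ := by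
      intro y hy
      set c := (y ⬝ᵥ σ) / n with hc
      set x := y - c • σ with hx
      by_contra hne
      have hxne : x ≠ 0 := fun h => hne (by rw [hx, sub_eq_zero] at h; exact h)
      have hxσ : x ⬝ᵥ σ = 0 := by
        rw [hx, sub_dotProduct, smul_dotProduct, hσσ, smul_eq_mul, hc]
        field_simp
        ring
      have hSx : S *ᵥ x = 0 := by
        rw [hx, Matrix.mulVec_sub, Matrix.mulVec_smul, hy, hker, smul_zero, sub_zero]
      have := hl2 x hxσ hxne
      rw [hSx, dotProduct_zero] at this
      exact lt_irrefl _ this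
    ext i j
    have hcol : S *ᵥ (fun k => Y k j) = 0 := by
      funext i'
      have := congrFun (congrFun hSYmat i') j
      simpa [Matrix.mul_apply, Matrix.mulVec, dotProduct] using this
    have hcj := hkernel _ hcol
    set c := ((fun k => Y k j) ⬝ᵥ σ) / n with hcdef
    have hYij : ∀ k, Y k j = c * σ k := fun k => by
      have := congrFun hcj k
      simpa using this
    have hcσ : c * σ j = 1 := by rw [← hYij j, hdiag j]
    have hceq : c = σ j := by
      rcases hσ j with h | h <;> rw [h] at hcσ <;> rw [h] <;> linarith
    rw [Matrix.of_apply, hYij i, hceq]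
    ring
end

section
/- Let A and Ã be symmetric n×n matrices with entries in {0,1}, and let Y* be an n×n symmetric matrix with entries in [-1,1]. Suppose that for every (i,j), either Ãᵢⱼ = Aᵢⱼ, or (Ãᵢⱼ = 1, Aᵢⱼ = 0, Y*ᵢⱼ = 1), or (Ãᵢⱼ = 0, Aᵢⱼ = 1, Y*ᵢⱼ = -1) (monotone adversary). If Y* is the unique maximizer of ⟨A, Y⟩ over a feasible set 𝒞 of symmetric PSD matrices with unit diagonal containing Y*, then Y* is also the unique maximizer of ⟨Ã, Y⟩ over 𝒞. -/
open Matrix BigOperators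


lemma psd_entry_bound {n : ℕ} (M : Matrix (Fin n) (Fin n) ℝ)
    (hM : M.PosSemidef) (hd : ∀ i, M i i = 1) (i j : Fin n) : |M i j| ≤ 1 := by
  rcases eq_or_ne i j with rfl | hij
  · simp [hd i]
  have hsym : M j i = M i j := by
    have := hM.1
    rw [Matrix.IsHermitian] at this
    have := congrArg (fun N => N j i) this
    simpa [Matrix.conjTranspose_apply] using this.symm
  have key : ∀ (c : ℝ), c = 1 ∨ c = -1 →
      0 ≤ 2 + 2 * c * M i j := by
    intro c hc
    have h := hM.dotProduct_mulVec_nonneg (fun k => if k = i then 1 else if k = j then c else 0)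
    rw [dotProduct, Finset.sum_eq_add_of_mem i j (Finset.mem_univ i) (Finset.mem_univ j) hij ?_] at h
    · simp only [star_trivial, if_pos rfl, if_neg hij, if_neg (Ne.symm hij)] at h
      rw [mulVec, mulVec, dotProduct, dotProduct,
        Finset.sum_eq_add_of_mem i j (Finset.mem_univ i) (Finset.mem_univ j) hij ?_,
        Finset.sum_eq_add_of_mem i j (Finset.mem_univ i) (Finset.mem_univ j) hij ?_] at h
      · simp only [if_pos rfl, if_neg hij, if_neg (Ne.symm hij)] at h
        rw [hd i, hd j, hsym] at h
        simp at h; rcases hc with rfl | rfl <;> nlinarith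
      · intro k _ hk; simp [hk.1, hk.2]
      · intro k _ hk; simp [hk.1, hk.2]
    · intro k _ hk; simp [hk.1, hk.2]
  have h1 := key 1 (Or.inl rfl)
  have h2 := key (-1) (Or.inr rfl)
  rw [abs_le]; constructor <;> nlinarith


theorem stmt6 (n : ℕ) (A Atil Ystar : Matrix (Fin n) (Fin n) ℝ)
    (hA : A.IsSymm) (hAtil : Atil.IsSymm)
    (hA01 : ∀ i j, A i j = 0 ∨ A i j = 1)
    (hAtil01 : ∀ i j, Atil i j = 0 ∨ Atil i j = 1)
    (hYs : Ystar.IsSymm) (hYb : ∀ i j, |Ystar i j| ≤ 1)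
    (hmono : ∀ i j, Atil i j = A i j ∨ (Atil i j = 1 ∧ A i j = 0 ∧ Ystar i j = 1) ∨
      (Atil i j = 0 ∧ A i j = 1 ∧ Ystar i j = -1))
    (C : Set (Matrix (Fin n) (Fin n) ℝ))
    (hC : ∀ Y ∈ C, Y.PosSemidef ∧ ∀ i, Y i i = 1)
    (hYin : Ystar ∈ C)
    (hopt : ∀ Y ∈ C, Y ≠ Ystar →
      (∑ i, ∑ j, A i j * Y i j) < ∑ i, ∑ j, A i j * Ystar i j) :
    ∀ Y ∈ C, Y ≠ Ystar →
      (∑ i, ∑ j, Atil i j * Y i j) < ∑ i, ∑ j, Atil i j * Ystar i j := by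
  intro Y hY hne
  obtain ⟨hpsd, hdiag⟩ := hC Y hY
  have hYbd : ∀ i j, |Y i j| ≤ 1 := psd_entry_bound Y hpsd hdiag
  have hptA : ∀ i j, Atil i j * Y i j - A i j * Y i j ≤
      Atil i j * Ystar i j - A i j * Ystar i j := by
    intro i j
    rcases hmono i j with h | ⟨h1, h2, h3⟩ | ⟨h1, h2, h3⟩
    · simp [h]
    · have := (abs_le.mp (hYbd i j)).2
      rw [h1, h2, h3]; linarith
    · have := (abs_le.mp (hYbd i j)).1
      rw [h1, h2, h3]; linarith
  have hsum : (∑ i, ∑ j, (Atil i j * Y i j - A i j * Y i j)) ≤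
      ∑ i, ∑ j, (Atil i j * Ystar i j - A i j * Ystar i j) := by
    apply Finset.sum_le_sum; intro i _
    apply Finset.sum_le_sum; intro j _
    exact hptA i j
  have hstrict := hopt Y hY hne
  simp only [Finset.sum_sub_distrib] at hsum
  linarith
end

section
/- Let A be a real symmetric n×n matrix, ξ* ∈ {0,1}^n with Σᵢ ξ*ᵢ = K, and Z* = ξ*(ξ*)ᵀ. Suppose there exist a diagonal matrix D* ≥ 0, a symmetric matrix B* with nonnegative entries, and reals λ*, η* such that S* := D* - B* - A + η*I + λ*J is positive semidefinite with strictly positive second smallest eigenvalue, S*ξ* = 0, d*ᵢ(Z*ᵢᵢ - 1) = 0 for all i, and B*ᵢⱼ Z*ᵢⱼ = 0 for all i, j. Then Z* is the unique maximizer of ⟨A, Z⟩ over symmetric PSD matrices Z with 0 ≤ Zᵢⱼ, Zᵢᵢ ≤ 1 for all i, j, trace(Z) = K, and ⟨J, Z⟩ = K². -/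
open Matrix BigOperators

theorem stmt7 (n K : ℕ) (A : Matrix (Fin n) (Fin n) ℝ) (hA : A.IsSymm)
    (ξ : Fin n → ℝ) (hξ : ∀ i, ξ i = 0 ∨ ξ i = 1) (hsum : ∑ i, ξ i = K)
    (d : Fin n → ℝ) (hd : ∀ i, 0 ≤ d i)
    (B : Matrix (Fin n) (Fin n) ℝ) (hBsymm : B.IsSymm) (hBpos : ∀ i j, 0 ≤ B i j)
    (lam η : ℝ)
    (S : Matrix (Fin n) (Fin n) ℝ)
    (hS : S = Matrix.diagonal d - B - A + η • (1 : Matrix (Fin n) (Fin n) ℝ)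
      + lam • (Matrix.of fun _ _ => (1 : ℝ)))
    (hpsd : S.PosSemidef)
    (hl2 : ∀ x : Fin n → ℝ, x ⬝ᵥ ξ = 0 → x ≠ 0 → 0 < x ⬝ᵥ (S *ᵥ x))
    (hker : S *ᵥ ξ = 0)
    (hslackD : ∀ i, d i * (ξ i * ξ i - 1) = 0)
    (hslackB : ∀ i j, B i j * (ξ i * ξ j) = 0) :
    ∀ Z : Matrix (Fin n) (Fin n) ℝ, Z.PosSemidef →
      (∀ i j, 0 ≤ Z i j) → (∀ i, Z i i ≤ 1) →
      Z.trace = (K : ℝ) → (∑ i, ∑ j, Z i j) = (K : ℝ) ^ 2 →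
      (∑ i, ∑ j, A i j * Z i j) ≤ (∑ i, ∑ j, A i j * (ξ i * ξ j)) ∧
      ((∑ i, ∑ j, A i j * Z i j) = (∑ i, ∑ j, A i j * (ξ i * ξ j)) →
        Z = Matrix.of fun i j => ξ i * ξ j) := by
  intro Z hZ hZpos hZdiag htr hsumZ
  have hξsq : ∀ i, ξ i * ξ i = ξ i := fun i => by rcases hξ i with h | h <;> simp [h]
  -- entrywise identity for S + B + A
  have hentry : ∀ i j, S i j + B i j + A i j = (if i = j then d i + η else 0) + lam := by
    intro i j
    rw [hS]
    simp only [Matrix.add_apply, Matrix.sub_apply, Matrix.smul_apply, Matrix.one_apply,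
      Matrix.diagonal_apply, Matrix.of_apply, smul_eq_mul]
    split_ifs <;> ring
  -- key linear identity
  have key : ∀ M : Matrix (Fin n) (Fin n) ℝ,
      (∑ i, ∑ j, A i j * M i j)
        = (∑ i, (d i + η) * M i i) + lam * (∑ i, ∑ j, M i j)
          - (∑ i, ∑ j, S i j * M i j) - (∑ i, ∑ j, B i j * M i j) := by
    intro M
    have h1 : ∀ i, ∑ j, (S i j + B i j + A i j) * M i j
        = (d i + η) * M i i + lam * ∑ j, M i j := by
      intro i
      have : ∀ j, (S i j + B i j + A i j) * M i j
          = (if i = j then (d i + η) * M i j else 0) + lam * M i j := by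
        intro j
        rw [hentry]
        split_ifs <;> ring
      rw [Finset.sum_congr rfl fun j _ => this j, Finset.sum_add_distrib,
        Finset.sum_ite_eq, ← Finset.mul_sum]
      simp
    have h2 : ∑ i, ∑ j, (S i j + B i j + A i j) * M i j
        = (∑ i, (d i + η) * M i i) + lam * (∑ i, ∑ j, M i j) := by
      rw [Finset.sum_congr rfl fun i _ => h1 i, Finset.sum_add_distrib, ← Finset.mul_sum]
    have h3 : ∑ i, ∑ j, (S i j + B i j + A i j) * M i j
        = (∑ i, ∑ j, S i j * M i j) + (∑ i, ∑ j, B i j * M i j)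
          + (∑ i, ∑ j, A i j * M i j) := by
      simp [add_mul, Finset.sum_add_distrib]
    linarith [h2, h3]
  -- value at the planted solution
  have hSstar : (∑ i, ∑ j, S i j * (ξ i * ξ j)) = 0 := by
    have : ∀ i, ∑ j, S i j * (ξ i * ξ j) = ξ i * (S *ᵥ ξ) i := by
      intro i
      rw [Matrix.mulVec, dotProduct, Finset.mul_sum]
      exact Finset.sum_congr rfl fun j _ => by ring
    rw [Finset.sum_congr rfl fun i _ => this i, hker]
    simp
  have hBstar : (∑ i, ∑ j, B i j * (ξ i * ξ j)) = 0 :=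
    Finset.sum_eq_zero fun i _ => Finset.sum_eq_zero fun j _ => hslackB i j
  have hDstar : (∑ i, (d i + η) * (ξ i * ξ i)) = (∑ i, d i) + η * K := by
    have : ∀ i, (d i + η) * (ξ i * ξ i) = d i + η * ξ i := by
      intro i
      have h1 := hslackD i
      have h2 := hξsq i
      linear_combination h1 + η * h2
    rw [Finset.sum_congr rfl fun i _ => this i, Finset.sum_add_distrib, ← Finset.mul_sum, hsum]
  have hJstar : (∑ i, ∑ j, (ξ i * ξ j)) = (K : ℝ) ^ 2 := by
    have : ∀ i, ∑ j, ξ i * ξ j = ξ i * (K : ℝ) := by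
      intro i
      rw [← Finset.mul_sum, hsum]
    rw [Finset.sum_congr rfl fun i _ => this i, ← Finset.sum_mul, hsum]
    ring
  have hstar : (∑ i, ∑ j, A i j * (ξ i * ξ j)) = (∑ i, d i) + η * K + lam * (K : ℝ) ^ 2 := by
    have hk := key (Matrix.of fun i j => ξ i * ξ j)
    simp only [Matrix.of_apply] at hk
    rw [hk, hSstar, hBstar, hDstar, hJstar]
    ring
  -- nonnegativity of the S-term
  obtain ⟨W, hW⟩ : ∃ W : Matrix (Fin n) (Fin n) ℝ, Z = Wᴴ * W := by
    open scoped MatrixOrder in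
    obtain ⟨W, hW⟩ := CStarAlgebra.nonneg_iff_eq_star_mul_self.mp hZ.nonneg
    exact ⟨W, by rw [hW, star_eq_conjTranspose]⟩
  have hZentry : ∀ i j, Z i j = ∑ k, W k i * W k j := by
    intro i j
    rw [hW]
    simp [Matrix.mul_apply, Matrix.conjTranspose_apply]
  have tS_decomp : (∑ i, ∑ j, S i j * Z i j)
      = ∑ k, (fun i => W k i) ⬝ᵥ (S *ᵥ fun i => W k i) := by
    simp only [dotProduct, Matrix.mulVec]
    calc ∑ i, ∑ j, S i j * Z i j
        = ∑ i, ∑ k, W k i * ∑ j, S i j * W k j := by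
          refine Finset.sum_congr rfl fun i _ => ?_
          calc ∑ j, S i j * Z i j = ∑ j, ∑ k, S i j * (W k i * W k j) := by
                refine Finset.sum_congr rfl fun j _ => ?_
                rw [hZentry, Finset.mul_sum]
            _ = ∑ k, ∑ j, S i j * (W k i * W k j) := Finset.sum_comm
            _ = ∑ k, W k i * ∑ j, S i j * W k j := by
                refine Finset.sum_congr rfl fun k _ => ?_
                rw [Finset.mul_sum]
                exact Finset.sum_congr rfl fun j _ => by ring
      _ = ∑ k, ∑ i, W k i * ∑ j, S i j * W k j := Finset.sum_comm
  have tS_nonneg : 0 ≤ ∑ i, ∑ j, S i j * Z i j := by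
    rw [tS_decomp]
    exact Finset.sum_nonneg fun k _ => by simpa using hpsd.dotProduct_mulVec_nonneg _
  have tB_nonneg : 0 ≤ ∑ i, ∑ j, B i j * Z i j :=
    Finset.sum_nonneg fun i _ => Finset.sum_nonneg fun j _ =>
      mul_nonneg (hBpos i j) (hZpos i j)
  have htrZ : (∑ i, Z i i) = (K : ℝ) := by
    rw [← htr]; rfl
  have hdZ : (∑ i, d i * Z i i) ≤ ∑ i, d i :=
    Finset.sum_le_sum fun i _ => by nlinarith [hd i, hZdiag i, hZpos i i]
  have hAZ : (∑ i, ∑ j, A i j * Z i j)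
      = (∑ i, d i * Z i i) + η * K + lam * (K : ℝ) ^ 2
        - (∑ i, ∑ j, S i j * Z i j) - (∑ i, ∑ j, B i j * Z i j) := by
    rw [key Z, hsumZ]
    have : (∑ i, (d i + η) * Z i i) = (∑ i, d i * Z i i) + η * K := by
      rw [← htrZ, Finset.mul_sum, ← Finset.sum_add_distrib]
      exact Finset.sum_congr rfl fun i _ => by ring
    rw [this]
  constructor
  · rw [hstar]; linarith
  · intro heq
    rw [hstar] at heq
    have htS0 : (∑ i, ∑ j, S i j * Z i j) = 0 := by linarith
    -- each row of W is in the kernel of S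
    have hrow : ∀ k, S *ᵥ (fun i => W k i) = 0 := by
      intro k
      have hnn : ∀ k ∈ Finset.univ (α := Fin n),
          0 ≤ (fun i => W k i) ⬝ᵥ (S *ᵥ fun i => W k i) := fun k _ => by simpa using hpsd.dotProduct_mulVec_nonneg _
      have := (Finset.sum_eq_zero_iff_of_nonneg hnn).mp (tS_decomp ▸ htS0) k (Finset.mem_univ k)
      have h0 : star (fun i => W k i) ⬝ᵥ (S *ᵥ fun i => W k i) = 0 := by
        simpa using this
      exact (hpsd.dotProduct_mulVec_zero_iff _).mp h0
    -- hence each column of Z is in the kernel of S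
    have hcol : ∀ j, S *ᵥ (fun i => Z i j) = 0 := by
      intro j
      funext i
      have : (S *ᵥ fun i => Z i j) i = ∑ k, (S *ᵥ fun i => W k i) i * W k j := by
        simp only [Matrix.mulVec, dotProduct]
        calc ∑ m, S i m * Z m j
            = ∑ m, ∑ k, S i m * (W k m * W k j) := by
              refine Finset.sum_congr rfl fun m _ => ?_
              rw [hZentry, Finset.mul_sum]
          _ = ∑ k, ∑ m, S i m * (W k m * W k j) := Finset.sum_comm
          _ = ∑ k, (∑ m, S i m * W k m) * W k j := by
              refine Finset.sum_congr rfl fun k _ => ?_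
              rw [Finset.sum_mul]
              exact Finset.sum_congr rfl fun m _ => by ring
      rw [this]
      simp [hrow, Pi.zero_apply]
    have hsymmZ : ∀ i j, Z i j = Z j i := by
      intro i j
      have := congrFun (congrFun hZ.1 i) j
      simpa [Matrix.conjTranspose_apply] using this.symm
    rcases Nat.eq_zero_or_pos K with hK0 | hKpos
    · -- K = 0 : ξ = 0 and Z = 0
      subst hK0
      have hξ0 : ∀ i, ξ i = 0 := by
        intro i
        have hnn : ∀ i ∈ Finset.univ (α := Fin n), 0 ≤ ξ i := fun i _ => by
          rcases hξ i with h | h <;> simp [h]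
        have : (∑ i, ξ i) = 0 := by rw [hsum]; simp
        exact (Finset.sum_eq_zero_iff_of_nonneg hnn).mp this i (Finset.mem_univ i)
      have hZ0 : ∀ j, (fun i => Z i j) = 0 := by
        intro j
        by_contra hne
        have hdot : (fun i => Z i j) ⬝ᵥ ξ = 0 := by
          simp [dotProduct, hξ0]
        have := hl2 _ hdot hne
        rw [hcol j] at this
        simp at this
      ext i j
      have := congrFun (hZ0 j) i
      simp only [Pi.zero_apply] at this
      simp [this, hξ0]
    · -- K ≥ 1
      have hKposR : (0 : ℝ) < K := by exact_mod_cast hKpos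
      have hξξ : ξ ⬝ᵥ ξ = (K : ℝ) := by
        simp only [dotProduct]
        rw [Finset.sum_congr rfl fun i _ => hξsq i, hsum]
      have hkernel : ∀ x : Fin n → ℝ, S *ᵥ x = 0 → x = ((x ⬝ᵥ ξ) / K) • ξ := by
        intro x hx
        by_contra hne
        have hy : x - ((x ⬝ᵥ ξ) / K) • ξ ≠ 0 := by
          intro h
          exact hne (by rwa [sub_eq_zero] at h)
        have hdot : (x - ((x ⬝ᵥ ξ) / K) • ξ) ⬝ᵥ ξ = 0 := by
          rw [sub_dotProduct, smul_dotProduct, hξξ, smul_eq_mul]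
          field_simp
          ring
        have hSy : S *ᵥ (x - ((x ⬝ᵥ ξ) / K) • ξ) = 0 := by
          rw [Matrix.mulVec_sub, Matrix.mulVec_smul, hx, hker]
          simp
        have := hl2 _ hdot hy
        rw [hSy] at this
        simp at this
      obtain ⟨i0, hi0⟩ : ∃ i, ξ i = 1 := by
        by_contra h
        push_neg at h
        have h0 : ∀ i, ξ i = 0 := fun i => (hξ i).resolve_right (h i)
        have : (∑ i, ξ i) = 0 := Finset.sum_eq_zero fun i _ => h0 i
        rw [hsum] at this
        exact absurd this (ne_of_gt hKposR)
      have hZcol : ∀ j i, Z i j = (((fun i => Z i j) ⬝ᵥ ξ) / K) * ξ i := by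
        intro j i
        have := congrFun (hkernel _ (hcol j)) i
        simpa using this
      set c : Fin n → ℝ := fun j => ((fun i => Z i j) ⬝ᵥ ξ) / K with hc
      have hZc : ∀ i j, Z i j = c j * ξ i := fun i j => hZcol j i
      have hcj : ∀ j, c j = c i0 * ξ j := by
        intro j
        have h1 : Z i0 j = c j := by rw [hZc, hi0, mul_one]
        have h2 : Z i0 j = c i0 * ξ j := by rw [hsymmZ, hZc]
        rw [h1] at h2
        exact h2
      have hZform : ∀ i j, Z i j = c i0 * (ξ i * ξ j) := by
        intro i j
        rw [hZc, hcj]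
        ring
      have hci0 : c i0 = 1 := by
        have : (∑ i, Z i i) = c i0 * (K : ℝ) := by
          rw [Finset.sum_congr rfl fun i _ => hZform i i, ← Finset.mul_sum,
            Finset.sum_congr rfl fun i _ => hξsq i, hsum]
        rw [htrZ] at this
        field_simp at this
        linarith
      ext i j
      rw [hZform, hci0]
      simp
end

section
/- For integers 0 < k < n with λ = k/n, the binomial coefficient satisfies (√π/2)·(2πnλ(1-λ))^{-1/2}·exp(n·h(λ)) ≤ C(n,k) ≤ (2πnλ(1-λ))^{-1/2}·exp(n·h(λ)), where h(λ) = -λ log λ - (1-λ) log(1-λ). -/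
open Real Stirling Filter Topology Nat

private lemma sq_le_imp' {a b : ℝ} (hb : 0 ≤ b) (h : a^2 ≤ b^2) (ha : 0 ≤ a) : a ≤ b := by
  nlinarith

private lemma s_pos' {m : ℕ} (hm : 1 ≤ m) : 0 < stirlingSeq m := by
  have h := stirlingSeq'_pos (m - 1)
  have : m - 1 + 1 = m := by omega
  rwa [this] at h

private lemma sqrt_pi_le_s {m : ℕ} (hm : 1 ≤ m) : √π ≤ stirlingSeq m := by
  obtain ⟨j, rfl⟩ := Nat.exists_eq_add_of_le hm
  have ht : Tendsto (stirlingSeq ∘ Nat.succ) atTop (𝓝 (√π)) :=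
    tendsto_stirlingSeq_sqrt_pi.comp (tendsto_add_atTop_nat 1)
  simpa [Nat.add_comm] using stirlingSeq'_antitone.le_of_tendsto ht j

private lemma s_anti' {j m : ℕ} (hj : 1 ≤ j) (hjm : j ≤ m) :
    stirlingSeq m ≤ stirlingSeq j := by
  obtain ⟨i, rfl⟩ := Nat.exists_eq_add_of_le hj
  obtain ⟨l, rfl⟩ := Nat.exists_eq_add_of_le hjm
  have := stirlingSeq'_antitone (Nat.le_add_right i l)
  simpa [Function.comp, Nat.succ_eq_add_one, Nat.add_comm, Nat.add_assoc,
    Nat.add_left_comm] using this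

private lemma fact_eq' {m : ℕ} (hm : 1 ≤ m) :
    (m ! : ℝ) = stirlingSeq m * (√(2 * m) * ((m : ℝ) / exp 1) ^ m) := by
  have h0 : (0:ℝ) < √(2 * m) * ((m : ℝ) / exp 1) ^ m := by
    have : (0:ℝ) < m := by exact_mod_cast hm
    positivity
  rw [stirlingSeq, div_mul_cancel₀ _ h0.ne']

private lemma key_identity {n k m : ℕ} (hk : 1 ≤ k) (hm : 1 ≤ m) (h : k + m = n) :
    (n.choose k : ℝ) = √π * stirlingSeq n / (stirlingSeq k * stirlingSeq m) *
      ((n:ℝ)^n / ((k:ℝ)^k * (m:ℝ)^m) / √(2*π*(k:ℝ)*m/n)) := by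
  have hn : 1 ≤ n := by omega
  have hkR : (0:ℝ) < k := by exact_mod_cast hk
  have hmR : (0:ℝ) < m := by exact_mod_cast hm
  have hnR : (0:ℝ) < n := by exact_mod_cast hn
  have he2 : Real.exp (k:ℝ) * Real.exp (m:ℝ) = Real.exp (n:ℝ) := by
    rw [← Real.exp_add]
    congr 1
    exact_mod_cast congrArg (Nat.cast : ℕ → ℝ) h
  have hC : (n.choose k : ℝ) * ((k ! : ℝ) * (m ! : ℝ)) = (n ! : ℝ) := by
    have h2 := Nat.choose_mul_factorial_mul_factorial (show k ≤ n by omega)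
    have hm' : n - k = m := by omega
    rw [hm'] at h2
    exact_mod_cast by rw [← h2]; ring
  have hC2 : (n.choose k : ℝ) = (n ! : ℝ) / ((k ! : ℝ) * (m ! : ℝ)) := by
    rw [eq_div_iff (by positivity)]; exact hC
  rw [hC2, fact_eq' hk, fact_eq' hm, fact_eq' hn]
  have hsk' : 0 < stirlingSeq k := s_pos' hk
  have hsm' : 0 < stirlingSeq m := s_pos' hm
  have e1 : (0:ℝ) < exp 1 := exp_pos 1
  rw [div_pow, div_pow, div_pow]
  have h2k : (0:ℝ) < √(2*(k:ℝ)) := by positivity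
  have h2m : (0:ℝ) < √(2*(m:ℝ)) := by positivity
  have h2q : (0:ℝ) < √(2*π*(k:ℝ)*m/n) := by
    apply Real.sqrt_pos.mpr; positivity
  field_simp
  have hpow : rexp 1 ^ k * rexp 1 ^ m = rexp 1 ^ n := by rw [← pow_add, h]
  have hsq : √(2 * (n:ℝ)) * √(2 * k * m * π / n) = √π * √(2 * (k:ℝ)) * √(2 * (m:ℝ)) := by
    rw [← Real.sqrt_mul (by positivity), ← Real.sqrt_mul (by positivity),
      ← Real.sqrt_mul (by positivity)]
    congr 1
    field_simp
  linear_combination (stirlingSeq n * √(2 * (n:ℝ)) * √(2 * k * m * π / n)) * hpow +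
    (stirlingSeq n * rexp 1 ^ n) * hsq

private lemma s2_val' : stirlingSeq 2 = exp 1 ^ 2 / 4 := by
  rw [stirlingSeq]
  norm_num [Nat.factorial]
  rw [show rexp 2 = rexp 1 ^ 2 by rw [← Real.exp_nat_mul]; norm_num]
  rw [div_pow]
  field_simp
  ring

private lemma s3_val' : stirlingSeq 3 = 2 * exp 1 ^ 3 / (9 * √6) := by
  rw [stirlingSeq]
  norm_num [Nat.factorial]
  rw [div_pow]
  rw [div_eq_div_iff (by positivity) (by positivity)]
  have h6 : √6 * √6 = 6 := Real.mul_self_sqrt (by norm_num)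
  field_simp
  rw [show rexp 3 = rexp 1 ^ 3 by rw [← Real.exp_nat_mul]; norm_num]
  nlinarith [h6, Real.sqrt_nonneg 6, exp_pos 1, pow_pos (exp_pos 1) 3]

private lemma s4_val' : stirlingSeq 4 = 3 * exp 1 ^ 4 / (64 * √2) := by
  rw [stirlingSeq]
  norm_num [Nat.factorial]
  have h8 : √(8:ℝ) = 2 * √2 := by
    rw [show (8:ℝ) = 4 * 2 by norm_num, Real.sqrt_mul (by norm_num),
      show (4:ℝ) = 2^2 by norm_num, Real.sqrt_sq (by norm_num)]
  rw [h8, div_pow]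
  rw [div_eq_div_iff (by positivity) (by positivity)]
  have h2 : √2 * √2 = 2 := Real.mul_self_sqrt (by norm_num)
  field_simp
  rw [show rexp 4 = rexp 1 ^ 4 by rw [← Real.exp_nat_mul]; norm_num]
  nlinarith [h2, Real.sqrt_nonneg 2, exp_pos 1, pow_pos (exp_pos 1) 4]

private lemma L11' : stirlingSeq 1 * stirlingSeq 1 ≤ 2 * stirlingSeq 2 := by
  rw [stirlingSeq_one, s2_val']
  have h2 : √2 * √2 = 2 := Real.mul_self_sqrt (by norm_num)
  rw [div_mul_div_comm _ √2 _ √2, h2, div_le_iff₀ (by norm_num)]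
  nlinarith [pow_pos (exp_pos 1) 2]

private lemma L12' : stirlingSeq 1 * stirlingSeq 2 ≤ 2 * stirlingSeq 3 := by
  rw [stirlingSeq_one, s2_val', s3_val']
  have h26 : 9 * √6 ≤ 16 * √2 := by
    apply sq_le_imp' (by positivity) ?_ (by positivity)
    rw [mul_pow, mul_pow, Real.sq_sqrt (by norm_num : (0:ℝ) ≤ 6),
      Real.sq_sqrt (by norm_num : (0:ℝ) ≤ 2)]
    norm_num
  have h9 : (0:ℝ) < 9 * √6 := by positivity
  rw [div_mul_div_comm _ √2 _ 4,
    show (2:ℝ) * (2 * exp 1 ^ 3 / (9 * √6)) = 4 * exp 1 ^ 3 / (9 * √6) by ring,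
    div_le_div_iff₀ (by positivity) h9]
  nlinarith [pow_pos (exp_pos 1) 3, exp_pos 1, Real.sqrt_nonneg 2, Real.sqrt_nonneg 6]

private lemma L22' : stirlingSeq 2 * stirlingSeq 2 ≤ 2 * stirlingSeq 4 := by
  rw [s2_val', s4_val']
  have h2 : √2 ≤ 3/2 := by
    apply sq_le_imp' (by norm_num) ?_ (Real.sqrt_nonneg 2)
    rw [Real.sq_sqrt (by norm_num : (0:ℝ) ≤ 2)]; norm_num
  have h64 : (0:ℝ) < 64 * √2 := by positivity
  rw [div_mul_div_comm _ 4 _ 4,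
    show (2:ℝ) * (3 * exp 1 ^ 4 / (64 * √2)) = 6 * exp 1 ^ 4 / (64 * √2) by ring,
    div_le_div_iff₀ (by norm_num) h64]
  nlinarith [pow_pos (exp_pos 1) 4, Real.sqrt_nonneg 2, pow_pos (exp_pos 1) 2]

private lemma LA' : stirlingSeq 1 * stirlingSeq 3 ≤ 2 * √π := by
  rw [stirlingSeq_one, s3_val']
  have h9 : (0:ℝ) < √2 * (9 * √6) := by positivity
  rw [div_mul_div_comm _ √2 _ (9 * √6), div_le_iff₀ h9]
  have h1 : √2 * (9 * √6) = 18 * √3 := by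
    rw [show (6:ℝ) = 2 * 3 by norm_num, Real.sqrt_mul (by norm_num)]
    rw [show √2 * (9 * (√2 * √3)) = 9 * (√2 * √2) * √3 by ring,
      Real.mul_self_sqrt (by norm_num : (0:ℝ) ≤ 2)]
    ring
  have h2 : √3 * √π = √(3*π) := (Real.sqrt_mul (by norm_num) π).symm
  have h3 : (3.06:ℝ) ≤ √(3*π) := by
    rw [Real.le_sqrt (by norm_num) (by positivity)]
    nlinarith [Real.pi_gt_d6]
  have he : exp 1 ≤ 2.7182818286 := le_of_lt Real.exp_one_lt_d9
  have he4 : exp 1 ^ 4 ≤ 2.7182818286 ^ 4 := by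
    apply pow_le_pow_left₀ (exp_pos 1).le he
  calc exp 1 * (2 * exp 1 ^ 3) = 2 * exp 1 ^ 4 := by ring
    _ ≤ 2 * 2.7182818286 ^ 4 := by nlinarith
    _ ≤ 36 * √(3*π) := by nlinarith [h3]
    _ = 2 * √π * (18 * √3) := by rw [← h2]; ring
    _ = 2 * √π * (√2 * (9 * √6)) := by rw [h1]

private lemma prod_le' {n k m : ℕ} (hk : 1 ≤ k) (hm : 1 ≤ m) (h : k + m = n) :
    stirlingSeq k * stirlingSeq m ≤ 2 * stirlingSeq n := by
  have hn : 1 ≤ n := by omega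
  have hpis : (0:ℝ) ≤ √π := Real.sqrt_nonneg π
  by_cases h3 : 3 ≤ k ∨ 3 ≤ m
  · have hA : stirlingSeq k * stirlingSeq m ≤ 2 * √π := by
      rcases h3 with h3 | h3
      · calc stirlingSeq k * stirlingSeq m ≤ stirlingSeq 3 * stirlingSeq 1 :=
            mul_le_mul (s_anti' (by norm_num) h3) (s_anti' (by norm_num) hm)
              (s_pos' hm).le (s_pos' (by norm_num)).le
          _ = stirlingSeq 1 * stirlingSeq 3 := by ring
          _ ≤ 2 * √π := LA'
      · calc stirlingSeq k * stirlingSeq m ≤ stirlingSeq 1 * stirlingSeq 3 :=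
            mul_le_mul (s_anti' (by norm_num) hk) (s_anti' (by norm_num) h3)
              (s_pos' hm).le (s_pos' (by norm_num)).le
          _ ≤ 2 * √π := LA'
    calc stirlingSeq k * stirlingSeq m ≤ 2 * √π := hA
      _ ≤ 2 * stirlingSeq n := by nlinarith [sqrt_pi_le_s hn]
  · push_neg at h3
    obtain ⟨hk3, hm3⟩ := h3
    interval_cases k <;> interval_cases m <;> subst h
    · exact L11'
    · exact L12'
    · rw [mul_comm]; exact L12'
    · exact L22'

private lemma exp_ent {n k m : ℕ} (hk : 1 ≤ k) (hm : 1 ≤ m) (h : k + m = n)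
    (lam : ℝ) (hlam : lam = (k : ℝ) / n) :
    Real.exp ((n : ℝ) * (-lam * Real.log lam - (1 - lam) * Real.log (1 - lam))) =
      (n:ℝ)^n / ((k:ℝ)^k * (m:ℝ)^m) := by
  have hkR : (0:ℝ) < k := by exact_mod_cast hk
  have hmR : (0:ℝ) < m := by exact_mod_cast hm
  have hnR : (0:ℝ) < n := by exact_mod_cast (show 1 ≤ n by omega)
  have hcast : (k:ℝ) + m = n := by exact_mod_cast congrArg (Nat.cast : ℕ → ℝ) h
  have h1 : (1:ℝ) - lam = (m:ℝ) / n := by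
    rw [hlam]; field_simp; linarith [hcast]
  rw [h1, hlam, Real.log_div hkR.ne' hnR.ne', Real.log_div hmR.ne' hnR.ne']
  have harg : (n : ℝ) * (-((k:ℝ)/n) * (Real.log k - Real.log n) -
      ((m:ℝ)/n) * (Real.log m - Real.log n)) =
      Real.log ((n:ℝ)^n) - Real.log ((k:ℝ)^k * (m:ℝ)^m) := by
    rw [Real.log_mul (by positivity) (by positivity), Real.log_pow, Real.log_pow,
      Real.log_pow]
    field_simp
    linear_combination (Real.log (n:ℝ)) * hcast
  rw [harg, Real.exp_sub, Real.exp_log (by positivity), Real.exp_log (by positivity)]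

theorem stmt12 (n k : ℕ) (hk : 0 < k) (hkn : k < n)
    (lam : ℝ) (hlam : lam = (k : ℝ) / n) :
    Real.sqrt Real.pi / 2 *
      (Real.exp ((n : ℝ) * (-lam * Real.log lam - (1 - lam) * Real.log (1 - lam))) /
        Real.sqrt (2 * Real.pi * n * lam * (1 - lam))) ≤ (n.choose k : ℝ) ∧
    (n.choose k : ℝ) ≤
      Real.exp ((n : ℝ) * (-lam * Real.log lam - (1 - lam) * Real.log (1 - lam))) /
        Real.sqrt (2 * Real.pi * n * lam * (1 - lam)) := by
  set m := n - k with hm_def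
  have hm : 1 ≤ m := by omega
  have h : k + m = n := by omega
  have hk1 : 1 ≤ k := hk
  have hn1 : 1 ≤ n := by omega
  have hkR : (0:ℝ) < k := by exact_mod_cast hk
  have hmR : (0:ℝ) < m := by exact_mod_cast hm
  have hnR : (0:ℝ) < n := by exact_mod_cast hn1
  have hcast : (k:ℝ) + m = n := by exact_mod_cast congrArg (Nat.cast : ℕ → ℝ) h
  have h1 : (1:ℝ) - lam = (m:ℝ) / n := by
    rw [hlam]; field_simp; linarith [hcast]
  have hD : 2 * π * (n:ℝ) * lam * (1 - lam) = 2*π*(k:ℝ)*m/n := by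
    rw [h1, hlam]; field_simp
  rw [exp_ent hk1 hm h lam hlam, hD, key_identity hk1 hm h]
  have hsn := s_pos' hn1
  have hsk := s_pos' hk1
  have hsm := s_pos' hm
  have hP : (0:ℝ) < (n:ℝ)^n / ((k:ℝ)^k * (m:ℝ)^m) / √(2*π*(k:ℝ)*m/n) := by
    have : (0:ℝ) < √(2*π*(k:ℝ)*m/n) := Real.sqrt_pos.mpr (by positivity)
    positivity
  have hpi : (0:ℝ) < √π := Real.sqrt_pos.mpr Real.pi_pos
  constructor
  · apply mul_le_mul_of_nonneg_right _ hP.le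
    rw [div_le_div_iff₀ (by norm_num) (by positivity)]
    nlinarith [prod_le' hk1 hm h, hpi, mul_pos hsk hsm]
  · nth_rewrite 2 [show ((n:ℝ)^n / ((k:ℝ)^k * (m:ℝ)^m) / √(2*π*(k:ℝ)*m/n)) =
      1 * ((n:ℝ)^n / ((k:ℝ)^k * (m:ℝ)^m) / √(2*π*(k:ℝ)*m/n)) by ring]
    apply mul_le_mul_of_nonneg_right _ hP.le
    rw [div_le_one (by positivity)]
    calc √π * stirlingSeq n ≤ stirlingSeq m * stirlingSeq k :=
        mul_le_mul (sqrt_pi_le_s hm) (s_anti' hk1 (by omega)) hsn.le (hsm.trans_le (le_refl _)).le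
      _ = stirlingSeq k * stirlingSeq m := by ring
end

section
/- For integers 0 < k < n with λ = k/n and p ∈ (0,1) with λ > p, the binomial tail satisfies P(Binom(n,p) ≥ k) ≥ (8k(1-λ))^{-1/2}·exp(-n·d(λ‖p)), where d(λ‖p) = λ log(λ/p) + (1-λ) log((1-λ)/(1-p)). -/
open BigOperators

open Real Stirling


open Real

lemma log_taylor (t : ℝ) (ht : 0 ≤ t) (ht1 : t < 1) :
    Real.log (1 + t) ≤ t - t ^ 2 / 2 + t ^ 3 / (1 - t) := by
  have h : |(-t)| < 1 := by rw [abs_neg, abs_of_nonneg ht]; exact ht1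
  have H := Real.abs_log_sub_add_sum_range_le h 2
  rw [Finset.sum_range_succ, Finset.sum_range_succ, Finset.sum_range_zero] at H
  have h2 : (1 : ℝ) - -t = 1 + t := by ring
  rw [h2, abs_neg, abs_of_nonneg ht] at H
  have H' := (abs_le.1 H).2
  push_cast at H'
  nlinarith [H']

lemma ratio_pow_le_eight (m : ℕ) (hm : 1 ≤ m) :
    ((m : ℝ) + 1) ^ (2 * m + 1) ≤ 8 * (m : ℝ) ^ (2 * m + 1) := by
  by_cases h6 : m < 6
  · interval_cases m <;> norm_num
  · push_neg at h6
    have hm6 : (6:ℝ) ≤ m := by exact_mod_cast h6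
    have hm0 : (0:ℝ) < m := by linarith
    set t : ℝ := 1 / m with htdef
    have ht0 : 0 < t := by positivity
    have ht6 : t ≤ 1/6 := by
      rw [htdef]
      rw [div_le_div_iff₀ hm0 (by norm_num)]
      linarith
    have ht1 : t < 1 := lt_of_le_of_lt ht6 (by norm_num)
    have hlog := log_taylor t ht0.le ht1
    have hrem : t ^ 3 / (1 - t) ≤ (6/5) * t ^ 3 := by
      rw [div_le_iff₀ (by linarith)]
      nlinarith [mul_nonneg (pow_nonneg ht0.le 3) (by linarith : (0:ℝ) ≤ 1/6 - t)]
    have hminv : (m:ℝ) = 1 / t := by rw [htdef]; field_simp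
    have expand : (2*(m:ℝ)+1) * (t - t^2/2 + (6/5)*t^3) = 2 + (19/10)*t^2 + (6/5)*t^3 := by
      rw [hminv]; field_simp; ring
    have hlog2 : (0.6931471803 : ℝ) < Real.log 2 := Real.log_two_gt_d9
    have hkey : (2*(m:ℝ)+1) * Real.log (1 + t) ≤ 3 * Real.log 2 := by
      have h1 : Real.log (1+t) ≤ t - t^2/2 + (6/5)*t^3 := by linarith
      have h2 : (2*(m:ℝ)+1) * Real.log (1+t) ≤ (2*(m:ℝ)+1) * (t - t^2/2 + (6/5)*t^3) :=
        mul_le_mul_of_nonneg_left h1 (by linarith)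
      rw [expand] at h2
      nlinarith [sq_nonneg t, pow_le_pow_left₀ ht0.le ht6 2, pow_le_pow_left₀ ht0.le ht6 3]
    have h1t : (1 : ℝ) + t = ((m:ℝ)+1)/m := by rw [htdef]; field_simp
    have hpow : (((m:ℝ)+1)/m) ^ (2*m+1) ≤ 8 := by
      have hposL : (0:ℝ) < (((m:ℝ)+1)/m) ^ (2*m+1) := by positivity
      have hlogL : Real.log ((((m:ℝ)+1)/m) ^ (2*m+1)) ≤ Real.log 8 := by
        rw [Real.log_pow, ← h1t]
        push_cast
        have : Real.log 8 = 3 * Real.log 2 := by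
          rw [show (8:ℝ) = 2^3 by norm_num, Real.log_pow]; push_cast; ring
        rw [this]
        exact hkey
      exact (Real.log_le_log_iff hposL (by norm_num)).1 hlogL
    rw [div_pow, div_le_iff₀ (by positivity)] at hpow
    linarith [hpow]


lemma stirling_ge_sqrt_pi (n : ℕ) : Real.sqrt Real.pi ≤ stirlingSeq (n + 1) := by
  have ht : Filter.Tendsto (stirlingSeq ∘ Nat.succ) Filter.atTop (nhds (Real.sqrt Real.pi)) :=
    tendsto_stirlingSeq_sqrt_pi.comp (Filter.tendsto_add_atTop_nat 1)
  exact stirlingSeq'_antitone.le_of_tendsto ht n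

lemma stirlingSeq_two : stirlingSeq 2 = Real.exp 1 ^ 2 / 4 := by
  rw [stirlingSeq]
  have h4 : √(2 * (2:ℕ) : ℝ) = 2 := by
    rw [show (2 * (2:ℕ) : ℝ) = 2^2 by norm_num, Real.sqrt_sq (by norm_num : (0:ℝ) ≤ 2)]
  rw [h4]
  have he : Real.exp 1 ≠ 0 := (Real.exp_pos 1).ne'
  rw [div_pow]
  norm_num [Nat.factorial]
  field_simp

lemma fact_lb (n : ℕ) (hn : 1 ≤ n) :
    Real.sqrt Real.pi * (Real.sqrt (2*n) * ((n:ℝ)/Real.exp 1)^n) ≤ (n.factorial : ℝ) := by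
  obtain ⟨m, rfl⟩ : ∃ m, n = m + 1 := ⟨n - 1, by omega⟩
  have hD : (0:ℝ) < Real.sqrt (2*(m+1:ℕ)) * (((m+1:ℕ):ℝ)/Real.exp 1)^(m+1:ℕ) := by
    apply mul_pos (Real.sqrt_pos.2 (by positivity)) (pow_pos (by positivity) _)
  have h := stirling_ge_sqrt_pi m
  rw [stirlingSeq, le_div_iff₀ hD] at h
  exact h

lemma fact_ub (n : ℕ) (hn : 2 ≤ n) :
    (n.factorial : ℝ) ≤ (Real.exp 1 ^ 2 / 4) * (Real.sqrt (2*n) * ((n:ℝ)/Real.exp 1)^n) := by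
  obtain ⟨m, rfl⟩ : ∃ m, n = m + 1 := ⟨n - 1, by omega⟩
  have hm : 1 ≤ m := by omega
  have hD : (0:ℝ) < Real.sqrt (2*(m+1:ℕ)) * (((m+1:ℕ):ℝ)/Real.exp 1)^(m+1:ℕ) := by
    apply mul_pos (Real.sqrt_pos.2 (by positivity)) (pow_pos (by positivity) _)
  have h : stirlingSeq (m + 1) ≤ stirlingSeq 2 := stirlingSeq'_antitone hm
  rw [stirlingSeq_two] at h
  rw [stirlingSeq, div_le_iff₀ hD] at h
  exact h


lemma e8_le_1024pi : Real.exp 1 ^ 8 ≤ 1024 * Real.pi := by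
  have he : Real.exp 1 < 2.7182818286 := Real.exp_one_lt_d9
  have hpi : 3.141592 < Real.pi := Real.pi_gt_d6
  have h8 : Real.exp 1 ^ 8 < 2.7182818286 ^ 8 :=
    pow_lt_pow_left₀ he (Real.exp_pos 1).le (by norm_num)
  nlinarith [h8, hpi]

lemma key_choose (n k : ℕ) (hk : 1 ≤ k) (hkn : k < n) :
    ((n:ℝ)/(k:ℝ))^k * ((n:ℝ)/((n-k:ℕ):ℝ))^(n-k) *
      Real.sqrt ((n:ℝ)/(8*(k:ℝ)*((n-k:ℕ):ℝ))) ≤ (n.choose k : ℝ) := by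
  set j := n - k with hjdef
  have hj : 1 ≤ j := by omega
  have hkj : k + j = n := by omega
  set N : ℝ := (n:ℝ) with hNdef
  set a : ℝ := (k:ℝ) with hadef
  set b : ℝ := ((j:ℕ):ℝ) with hbdef
  have ha : (1:ℝ) ≤ a := by rw [hadef]; exact_mod_cast hk
  have hb : (1:ℝ) ≤ b := by rw [hbdef]; exact_mod_cast hj
  have ha0 : (0:ℝ) < a := by linarith
  have hb0 : (0:ℝ) < b := by linarith
  have hNab : N = a + b := by rw [hNdef, hadef, hbdef, ← hkj]; push_cast; ring
  have hN0 : (0:ℝ) < N := by linarith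
  have hC0 : (0:ℝ) ≤ (n.choose k : ℝ) := Nat.cast_nonneg _
  -- the squared key inequality
  have hsq : N^(2*n+1) ≤ 8 * (n.choose k : ℝ)^2 * a^(2*k+1) * b^(2*j+1) := by
    rcases eq_or_lt_of_le hk with hk1 | hk2
    · -- k = 1
      have hk1' : k = 1 := hk1.symm
      have hCval : (n.choose k : ℝ) = N := by rw [hk1', Nat.choose_one_right]
      have hL1 := ratio_pow_le_eight j hj
      have hbN : N = b + 1 := by rw [hNab, hadef, hk1']; push_cast; ring
      have haone : a^(2*k+1) = 1 := by rw [hadef, hk1']; norm_num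
      have hNj : N^(2*n+1) = N^(2*j+1) * N^2 := by rw [← pow_add]; congr 1; omega
      have hstep : N^(2*j+1) ≤ 8 * b^(2*j+1) := by rw [hbN]; exact hL1
      rw [hNj, hCval, haone]
      calc N^(2*j+1) * N^2 ≤ (8*b^(2*j+1)) * N^2 :=
            mul_le_mul_of_nonneg_right hstep (by positivity)
        _ = 8 * N^2 * 1 * b^(2*j+1) := by ring
    · rcases eq_or_lt_of_le hj with hj1 | hj2
      · -- j = 1
        have hj1' : j = 1 := hj1.symm
        have hCval : (n.choose k : ℝ) = N := by
          have h1 : n.choose k = n := by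
            have hkval : k = n - 1 := by omega
            rw [hkval, Nat.choose_symm (by omega : 1 ≤ n), Nat.choose_one_right]
          rw [h1]
        have hL1 := ratio_pow_le_eight k hk
        have haN : N = a + 1 := by rw [hNab, hbdef, hj1']; push_cast; ring
        have hbone : b^(2*j+1) = 1 := by rw [hbdef, hj1']; norm_num
        have hNk : N^(2*n+1) = N^(2*k+1) * N^2 := by rw [← pow_add]; congr 1; omega
        have hstep : N^(2*k+1) ≤ 8 * a^(2*k+1) := by rw [haN]; exact hL1
        rw [hNk, hCval, hbone]
        calc N^(2*k+1) * N^2 ≤ (8*a^(2*k+1)) * N^2 :=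
              mul_le_mul_of_nonneg_right hstep (by positivity)
          _ = 8 * N^2 * a^(2*k+1) * 1 := by ring
      · -- 2 ≤ k, 2 ≤ j : Stirling case
        set E : ℝ := Real.exp 1 with hEdef
        have hE0 : (0:ℝ) < E := Real.exp_pos 1
        have hn1 : 1 ≤ n := by omega
        have hlbn := fact_lb n hn1
        have hubk := fact_ub k hk2
        have hubj := fact_ub j hj2
        set F : ℝ := (k.factorial : ℝ) * (j.factorial : ℝ) with hFdef
        have hF0 : (0:ℝ) < F := by
          rw [hFdef]; positivity
        have hCF : (n.choose k : ℝ) * F = (n.factorial : ℝ) := by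
          rw [hFdef]
          have h := Nat.choose_mul_factorial_mul_factorial (le_of_lt hkn)
          rw [← hjdef] at h
          push_cast [← h]
          ring
        have hEn : E^n = E^k * E^j := by rw [← pow_add, hkj]
        have hlb' : Real.sqrt Real.pi * Real.sqrt (2*N) * N^n ≤ (n.factorial : ℝ) * E^n := by
          have h := mul_le_mul_of_nonneg_right hlbn (le_of_lt (pow_pos hE0 n))
          calc Real.sqrt Real.pi * Real.sqrt (2*N) * N^n
              = Real.sqrt Real.pi * (Real.sqrt (2*(n:ℕ)) * ((n:ℝ)/E)^n) * E^n := by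
                rw [div_pow]; rw [hNdef]; field_simp
            _ ≤ (n.factorial : ℝ) * E^n := h
        have hubk' : (k.factorial : ℝ) * E^k ≤ (E^2/4) * Real.sqrt (2*a) * a^k := by
          have h := mul_le_mul_of_nonneg_right hubk (le_of_lt (pow_pos hE0 k))
          calc (k.factorial : ℝ) * E^k
              ≤ ((E^2/4) * (Real.sqrt (2*(k:ℕ)) * ((k:ℝ)/E)^k)) * E^k := h
            _ = (E^2/4) * Real.sqrt (2*a) * a^k := by
                rw [div_pow]; rw [hadef]; field_simp
        have hubj' : (j.factorial : ℝ) * E^j ≤ (E^2/4) * Real.sqrt (2*b) * b^j := by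
          have h := mul_le_mul_of_nonneg_right hubj (le_of_lt (pow_pos hE0 j))
          calc (j.factorial : ℝ) * E^j
              ≤ ((E^2/4) * (Real.sqrt (2*(j:ℕ)) * ((j:ℝ)/E)^j)) * E^j := h
            _ = (E^2/4) * Real.sqrt (2*b) * b^j := by
                rw [div_pow]; rw [hbdef]; field_simp
        have hFE : F * E^n ≤ (E^2/4) * Real.sqrt (2*a) * a^k * ((E^2/4) * Real.sqrt (2*b) * b^j) := by
          rw [hEn, hFdef, show (k.factorial:ℝ) * (j.factorial:ℝ) * (E^k * E^j)
                = ((k.factorial:ℝ) * E^k) * ((j.factorial:ℝ) * E^j) by ring]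
          exact mul_le_mul hubk' hubj' (by positivity) (by positivity)
        have hFE0 : (0:ℝ) ≤ F * E^n := by positivity
        have hT : N^(2*n+1) * (F * E^n)^2 ≤ 8 * ((n.factorial:ℝ) * E^n)^2 * a^(2*k+1) * b^(2*j+1) := by
          have hs2a : Real.sqrt (2*a) ^ 2 = 2*a := Real.sq_sqrt (by linarith)
          have hs2b : Real.sqrt (2*b) ^ 2 = 2*b := Real.sq_sqrt (by linarith)
          have hs2N : Real.sqrt (2*N) ^ 2 = 2*N := Real.sq_sqrt (by linarith)
          have hspi : Real.sqrt Real.pi ^ 2 = Real.pi := Real.sq_sqrt (le_of_lt Real.pi_pos)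
          have step1 : N^(2*n+1) * (F * E^n)^2
              ≤ N^(2*n+1) * ((E^2/4) * Real.sqrt (2*a) * a^k * ((E^2/4) * Real.sqrt (2*b) * b^j))^2 := by
            apply mul_le_mul_of_nonneg_left _ (by positivity)
            exact pow_le_pow_left₀ hFE0 hFE 2
          have step3 : 8 * (Real.sqrt Real.pi * Real.sqrt (2*N) * N^n)^2 * a^(2*k+1) * b^(2*j+1)
              ≤ 8 * ((n.factorial:ℝ) * E^n)^2 * a^(2*k+1) * b^(2*j+1) := by
            apply mul_le_mul_of_nonneg_right _ (by positivity)
            apply mul_le_mul_of_nonneg_right _ (by positivity)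
            apply mul_le_mul_of_nonneg_left _ (by norm_num)
            apply pow_le_pow_left₀ (by positivity) hlb' 2
          refine le_trans step1 (le_trans ?_ step3)
          have hexp1 : N^(2*n+1) = (N^n)^2 * N := by
            rw [← pow_mul, ← pow_succ]; congr 1; omega
          have hexp2 : a^(2*k+1) = (a^k)^2 * a := by
            rw [← pow_mul, ← pow_succ]; congr 1; omega
          have hexp3 : b^(2*j+1) = (b^j)^2 * b := by
            rw [← pow_mul, ← pow_succ]; congr 1; omega
          have lhs_eq : N^(2*n+1) * ((E^2/4) * Real.sqrt (2*a) * a^k * ((E^2/4) * Real.sqrt (2*b) * b^j))^2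
              = (E^8/64) * ((N^n)^2 * N * a * b * (a^k)^2 * (b^j)^2) := by
            rw [hexp1, mul_pow, mul_pow, mul_pow, mul_pow, mul_pow, hs2a, hs2b]
            ring
          have rhs_eq : 8 * (Real.sqrt Real.pi * Real.sqrt (2*N) * N^n)^2 * a^(2*k+1) * b^(2*j+1)
              = (16*Real.pi) * ((N^n)^2 * N * a * b * (a^k)^2 * (b^j)^2) := by
            rw [hexp2, hexp3, mul_pow, mul_pow, hspi, hs2N]
            ring
          rw [lhs_eq, rhs_eq]
          apply mul_le_mul_of_nonneg_right _ (by positivity)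
          linarith [e8_le_1024pi]
        have hgoal : N^(2*n+1) * (F * E^n)^2
            ≤ (8 * (n.choose k : ℝ)^2 * a^(2*k+1) * b^(2*j+1)) * (F * E^n)^2 := by
          calc N^(2*n+1) * (F * E^n)^2
              ≤ 8 * ((n.factorial:ℝ) * E^n)^2 * a^(2*k+1) * b^(2*j+1) := hT
            _ = (8 * (n.choose k : ℝ)^2 * a^(2*k+1) * b^(2*j+1)) * (F * E^n)^2 := by
                rw [← hCF]; ring
        have hpos : (0:ℝ) < (F * E^n)^2 := by positivity
        exact le_of_mul_le_mul_right hgoal hpos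
  -- deduce the sqrt form from hsq
  have hX0 : (0:ℝ) ≤ (N/a)^k * (N/b)^j * Real.sqrt (N/(8*a*b)) := by positivity
  rw [← Real.sqrt_sq hX0, ← Real.sqrt_sq hC0]
  apply Real.sqrt_le_sqrt
  have hsqrt2 : Real.sqrt (N/(8*a*b)) ^ 2 = N/(8*a*b) := Real.sq_sqrt (by positivity)
  rw [mul_pow, mul_pow, hsqrt2]
  simp only [div_pow]
  rw [div_mul_div_comm, div_mul_div_comm]
  rw [div_le_iff₀ (by positivity)]
  have hexp1 : N^(2*n+1) = (N^k)^2 * (N^j)^2 * N := by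
    rw [← pow_mul, ← pow_mul, ← pow_add, ← pow_succ]; congr 1; omega
  have hexp2 : a^(2*k+1) = (a^k)^2 * a := by
    rw [← pow_mul, ← pow_succ]; congr 1; omega
  have hexp3 : b^(2*j+1) = (b^j)^2 * b := by
    rw [← pow_mul, ← pow_succ]; congr 1; omega
  rw [hexp1, hexp2, hexp3] at hsq
  calc (N^k)^2 * (N^j)^2 * N ≤ 8 * (n.choose k:ℝ)^2 * ((a^k)^2*a) * ((b^j)^2*b) := hsq
    _ = (n.choose k:ℝ)^2 * ((a^k)^2 * (b^j)^2 * (8*a*b)) := by ring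

theorem stmt13 (n k : ℕ) (hk : 0 < k) (hkn : k < n) (p : ℝ) (hp : 0 < p) (hp1 : p < 1)
    (lam : ℝ) (hlam : lam = (k : ℝ) / n) (hplam : p < lam) :
    Real.exp (-(n : ℝ) * (lam * Real.log (lam / p)
        + (1 - lam) * Real.log ((1 - lam) / (1 - p)))) /
      Real.sqrt (8 * k * (1 - lam)) ≤
    ∑ j ∈ Finset.Icc k n, (n.choose j : ℝ) * p ^ j * (1 - p) ^ (n - j) := by
  have hn0 : (0:ℝ) < n := by exact_mod_cast Nat.pos_of_ne_zero (by omega)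
  have hk0 : (0:ℝ) < k := by exact_mod_cast hk
  have hb0 : (0:ℝ) < ((n-k:ℕ):ℝ) := by
    have : 0 < n - k := by omega
    exact_mod_cast this
  have hlam0 : 0 < lam := by rw [hlam]; positivity
  have hlam1 : lam < 1 := by
    rw [hlam, div_lt_one hn0]; exact_mod_cast hkn
  have h1p : (0:ℝ) < 1 - p := by linarith
  have h1lam : (0:ℝ) < 1 - lam := by linarith
  have hnlam : (n:ℝ) * lam = k := by rw [hlam]; field_simp
  have h1lam_eq : 1 - lam = ((n-k:ℕ):ℝ)/n := by
    rw [hlam]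
    rw [Nat.cast_sub hkn.le]
    field_simp
  have hn1lam : (n:ℝ) * (1 - lam) = ((n-k:ℕ):ℝ) := by
    rw [h1lam_eq]; field_simp
  -- rewrite the exponential
  have hlog1 : Real.log (p/lam) = - Real.log (lam/p) := by rw [← Real.log_inv, inv_div]
  have hlog2 : Real.log ((1-p)/(1-lam)) = - Real.log ((1-lam)/(1-p)) := by
    rw [← Real.log_inv, inv_div]
  have hexp : Real.exp (-(n:ℝ) * (lam * Real.log (lam/p) + (1-lam) * Real.log ((1-lam)/(1-p))))
      = (p/lam)^k * ((1-p)/(1-lam))^(n-k) := by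
    have harg : -(n:ℝ) * (lam * Real.log (lam/p) + (1-lam) * Real.log ((1-lam)/(1-p)))
        = (k:ℝ) * Real.log (p/lam) + ((n-k:ℕ):ℝ) * Real.log ((1-p)/(1-lam)) := by
      rw [hlog1, hlog2, ← hnlam, ← hn1lam]; ring
    rw [harg, Real.exp_add, Real.exp_nat_mul, Real.exp_nat_mul,
      Real.exp_log (by positivity), Real.exp_log (by positivity)]
  rw [hexp]
  -- rewrite the square root denominator
  have hsqarg : 8 * (k:ℝ) * (1 - lam) = (8 * (k:ℝ) * ((n-k:ℕ):ℝ)) / n := by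
    rw [h1lam_eq]; ring
  rw [hsqarg, div_eq_mul_inv, ← Real.sqrt_inv, inv_div]
  -- factor out p^k (1-p)^(n-k)
  have e1 : p/lam = p * ((n:ℝ)/(k:ℝ)) := by rw [hlam]; field_simp
  have e2 : (1-p)/(1-lam) = (1-p) * ((n:ℝ)/((n-k:ℕ):ℝ)) := by
    rw [h1lam_eq, div_div_eq_mul_div, mul_div_assoc]
  calc (p/lam)^k * ((1-p)/(1-lam))^(n-k) * Real.sqrt ((n:ℝ)/(8*(k:ℝ)*((n-k:ℕ):ℝ)))
      = (p^k * (1-p)^(n-k)) *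
        (((n:ℝ)/(k:ℝ))^k * ((n:ℝ)/((n-k:ℕ):ℝ))^(n-k) *
          Real.sqrt ((n:ℝ)/(8*(k:ℝ)*((n-k:ℕ):ℝ)))) := by
        rw [e1, e2, mul_pow, mul_pow]; ring
    _ ≤ (p^k * (1-p)^(n-k)) * (n.choose k : ℝ) := by
        apply mul_le_mul_of_nonneg_left (key_choose n k hk hkn) (by positivity)
    _ = (n.choose k : ℝ) * p^k * (1-p)^(n-k) := by ring
    _ ≤ ∑ j ∈ Finset.Icc k n, (n.choose j : ℝ) * p ^ j * (1 - p) ^ (n - j) := by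
        apply Finset.single_le_sum
          (f := fun j => (n.choose j : ℝ) * p ^ j * (1 - p) ^ (n - j))
        · intro i _
          exact mul_nonneg (mul_nonneg (Nat.cast_nonneg _) (pow_nonneg hp.le _))
            (pow_nonneg h1p.le _)
        · exact Finset.mem_Icc.2 ⟨le_rfl, hkn.le⟩
end

section
/- Let σ* ∈ {-1,1}^n with Σᵢ σ*ᵢ = 0, and suppose A = E + (p-q)/2·Y* + (p+q)/2·J - p·I where Y* = σ*(σ*)ᵀ, J is the all-ones matrix, I the identity, and E = A - E[A] is a symmetric perturbation. With dᵢ* = Σⱼ Aᵢⱼσ*ᵢσ*ⱼ, D* = diag(dᵢ*), λ* ≥ (p+q)/2, and S* = D* - A + λ*J: for every unit vector x with x ⊥ σ*, xᵀS*x ≥ minᵢ dᵢ* + p - ‖E‖, where ‖E‖ is the spectral norm. -/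
open Matrix BigOperators RealInnerProductSpace

theorem stmt17 (n : ℕ) [NeZero n] (p q lam : ℝ)
    (σ : Fin n → ℝ) (hσ : ∀ i, σ i = 1 ∨ σ i = -1) (hsum : ∑ i, σ i = 0)
    (E A : Matrix (Fin n) (Fin n) ℝ) (hE : E.IsSymm)
    (hAdef : A = E + ((p - q) / 2) • (Matrix.of fun i j => σ i * σ j)
      + ((p + q) / 2) • (Matrix.of fun _ _ => (1 : ℝ))
      - p • (1 : Matrix (Fin n) (Fin n) ℝ))
    (d : Fin n → ℝ) (hd : ∀ i, d i = ∑ j, A i j * σ i * σ j)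
    (hlam : (p + q) / 2 ≤ lam)
    (S : Matrix (Fin n) (Fin n) ℝ)
    (hS : S = Matrix.diagonal d - A + lam • (Matrix.of fun _ _ => (1 : ℝ))) :
    ∀ x : Fin n → ℝ, (∑ i, (x i) ^ 2) = 1 → x ⬝ᵥ σ = 0 →
      (⨅ i, d i) + p - ‖Matrix.toEuclideanCLM (𝕜 := ℝ) E‖ ≤ x ⬝ᵥ (S *ᵥ x) := by
  intro x hx hxσ
  set s : ℝ := ∑ i, x i with hs
  -- quadratic form of E is bounded by operator norm
  have hEbound : x ⬝ᵥ (E *ᵥ x) ≤ ‖Matrix.toEuclideanCLM (𝕜 := ℝ) E‖ := by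
    set x' : EuclideanSpace ℝ (Fin n) := (WithLp.equiv 2 (Fin n → ℝ)).symm x with hx'
    have hnx : ‖x'‖ = 1 := by
      rw [EuclideanSpace.norm_eq]
      have : ∑ i, ‖x' i‖ ^ 2 = 1 := by
        simpa [hx', Real.norm_eq_abs, sq_abs] using hx
      rw [this, Real.sqrt_one]
    have hinner : x ⬝ᵥ (E *ᵥ x) = (inner ℝ x' (Matrix.toEuclideanCLM (𝕜 := ℝ) E x') : ℝ) := by
      rw [Matrix.inner_toEuclideanCLM]
      rfl
    have habs : |(inner ℝ x' (Matrix.toEuclideanCLM (𝕜 := ℝ) E x') : ℝ)| ≤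
        ‖Matrix.toEuclideanCLM (𝕜 := ℝ) E‖ := by
      calc |(inner ℝ x' (Matrix.toEuclideanCLM (𝕜 := ℝ) E x') : ℝ)|
          ≤ ‖x'‖ * ‖Matrix.toEuclideanCLM (𝕜 := ℝ) E x'‖ := abs_real_inner_le_norm _ _
        _ ≤ ‖x'‖ * (‖Matrix.toEuclideanCLM (𝕜 := ℝ) E‖ * ‖x'‖) := by
            gcongr; exact (Matrix.toEuclideanCLM (𝕜 := ℝ) E).le_opNorm x'
        _ = ‖Matrix.toEuclideanCLM (𝕜 := ℝ) E‖ := by rw [hnx]; ring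
    rw [hinner]
    linarith [le_abs_self (inner ℝ x' (Matrix.toEuclideanCLM (𝕜 := ℝ) E x') : ℝ)]
  -- individual quadratic forms
  have h2 : x ⬝ᵥ ((Matrix.of fun i j => σ i * σ j : Matrix (Fin n) (Fin n) ℝ) *ᵥ x)
      = (x ⬝ᵥ σ) * (x ⬝ᵥ σ) := by
    simp only [dotProduct, mulVec, Matrix.of_apply]
    rw [Finset.sum_mul]
    congr 1; ext i
    rw [Finset.mul_sum, Finset.mul_sum]
    congr 1; ext j; ring
  have h3 : x ⬝ᵥ ((Matrix.of fun _ _ => (1 : ℝ) : Matrix (Fin n) (Fin n) ℝ) *ᵥ x)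
      = s * s := by
    simp only [dotProduct, mulVec, Matrix.of_apply, one_mul, hs]
    rw [Finset.sum_mul]
  have h4 : x ⬝ᵥ ((1 : Matrix (Fin n) (Fin n) ℝ) *ᵥ x) = 1 := by
    rw [Matrix.one_mulVec]
    simpa [dotProduct, sq] using hx
  have h1 : x ⬝ᵥ ((Matrix.diagonal d) *ᵥ x) = ∑ i, d i * x i ^ 2 := by
    simp [dotProduct, Matrix.mulVec_diagonal, sq]; congr 1; ext i; ring
  -- lower bound on the diagonal part
  have hinf : (⨅ i, d i) ≤ ∑ i, d i * x i ^ 2 := by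
    have hbd : BddBelow (Set.range d) := (Set.finite_range d).bddBelow
    calc (⨅ i, d i) = (⨅ i, d i) * ∑ i, x i ^ 2 := by rw [hx, mul_one]
      _ = ∑ i, (⨅ j, d j) * x i ^ 2 := by rw [Finset.mul_sum]
      _ ≤ ∑ i, d i * x i ^ 2 := by
          apply Finset.sum_le_sum
          intro i _
          exact mul_le_mul_of_nonneg_right (ciInf_le hbd i) (sq_nonneg _)
  -- total
  have hkey : x ⬝ᵥ (S *ᵥ x) = (∑ i, d i * x i ^ 2) - x ⬝ᵥ (E *ᵥ x)
      - (p - q) / 2 * ((x ⬝ᵥ σ) * (x ⬝ᵥ σ)) - (p + q) / 2 * (s * s) + p + lam * (s * s) := by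
    rw [hS, hAdef]
    simp only [Matrix.add_mulVec, Matrix.sub_mulVec, Matrix.smul_mulVec,
      dotProduct_add, dotProduct_sub, dotProduct_smul, h1, h2, h3, h4, smul_eq_mul]
    ring
  rw [hkey, hxσ]
  nlinarith [mul_self_nonneg s, mul_nonneg (sub_nonneg.2 hlam) (mul_self_nonneg s)]
end
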